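/- Let v̄ > 0, let n ≥ 2 and 1 ≤ k < n, and let F be an atomless probability distribution with full support on [0, v̄]. For v ∈ (0, v̄] and κ ∈ {1, …, k}, let e_κ(v) denote the expected value of the κ-th largest of (n − k + κ − 1) i.i.d. draws from F conditioned on [0, v] (the truncation of F to [0, v]). Let μ, μ′ be probability mass functions on {1, …, k} such that μ strictly first-order stochastically dominates μ′ (Σ_{i ≥ j} μ(i) ≥ Σ_{i ≥ j} μ′(i) for all j, strictly for some j). Then Σ_{κ=1}^k μ′(κ)·e_κ(v) > Σ_{κ=1}^k μ(κ)·e_κ(v). -/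

import Mathlib

open MeasureTheory

/-- The `k`-th largest entry (1-indexed) of the tuple `y : Fin n → ℝ`:
sort `y` in increasing order and take the entry at position `n - k`. -/
noncomputable def kthLargest (n k : ℕ) (y : Fin n → ℝ) : ℝ :=
  if h : n - k < n then y (Tuple.sort y ⟨n - k, h⟩) else 0



/-- number of entries ≤ c -/
noncomputable def countLE {n : ℕ} (y : Fin n → ℝ) (c : ℝ) : ℕ :=
  (Finset.univ.filter fun i => y i ≤ c).card

lemma countLE_comp_perm {n : ℕ} (y : Fin n → ℝ) (σ : Equiv.Perm (Fin n)) (c : ℝ) :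
    countLE (y ∘ σ) c = countLE y c := by
  unfold countLE
  apply Finset.card_bij (fun i _ => σ i)
  · intro a ha; simp_all
  · intro a _ b _ hab; exact σ.injective hab
  · intro b hb; exact ⟨σ.symm b, by simp_all, by simp⟩

lemma countLE_mono {n : ℕ} (y : Fin n → ℝ) {c d : ℝ} (h : c ≤ d) :
    countLE y c ≤ countLE y d := by
  apply Finset.card_le_card
  intro i hi
  simp only [Finset.mem_filter] at *
  exact ⟨hi.1, hi.2.trans h⟩

lemma kthLargest_le_of_countLE {n k : ℕ} (hp : n - k < n) {y : Fin n → ℝ} {c : ℝ}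
    (h : n - k + 1 ≤ countLE y c) : kthLargest n k y ≤ c := by
  rw [kthLargest, dif_pos hp]
  by_contra hlt
  push_neg at hlt
  have hmono : Monotone (y ∘ Tuple.sort y) := Tuple.monotone_sort y
  have hcount : countLE (y ∘ Tuple.sort y) c = countLE y c := countLE_comp_perm y _ c
  have hsub : (Finset.univ.filter fun i => (y ∘ Tuple.sort y) i ≤ c)
      ⊆ Finset.Iio (⟨n - k, hp⟩ : Fin n) := by
    intro i hi
    simp only [Finset.mem_filter, Finset.mem_univ, true_and, Finset.mem_Iio] at *
    by_contra hge
    push_neg at hge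
    exact absurd (le_trans (hmono hge) hi) (not_le.mpr hlt)
  have := Finset.card_le_card hsub
  rw [Fin.card_Iio] at this
  rw [show (Finset.univ.filter fun i => (y ∘ Tuple.sort y) i ≤ c).card
      = countLE (y ∘ Tuple.sort y) c from rfl, hcount] at this
  replace this : countLE y c ≤ n - k := this
  omega

lemma countLE_kthLargest {n k : ℕ} (hp : n - k < n) (y : Fin n → ℝ) :
    n - k + 1 ≤ countLE y (kthLargest n k y) := by
  rw [kthLargest, dif_pos hp]
  have hmono : Monotone (y ∘ Tuple.sort y) := Tuple.monotone_sort y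
  have hcount : countLE (y ∘ Tuple.sort y) (y (Tuple.sort y ⟨n - k, hp⟩))
      = countLE y (y (Tuple.sort y ⟨n - k, hp⟩)) := countLE_comp_perm y _ _
  rw [← hcount]
  have hsub : Finset.Iic (⟨n - k, hp⟩ : Fin n)
      ⊆ Finset.univ.filter fun i => (y ∘ Tuple.sort y) i ≤ (y (Tuple.sort y ⟨n - k, hp⟩)) := by
    intro i hi
    simp only [Finset.mem_filter, Finset.mem_univ, true_and, Finset.mem_Iic] at *
    exact hmono hi
  have := Finset.card_le_card hsub
  rw [Fin.card_Iic] at this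
  exact this

lemma kthLargest_mem_range {n k : ℕ} (hp : n - k < n) (y : Fin n → ℝ) :
    ∃ i, kthLargest n k y = y i := by
  rw [kthLargest, dif_pos hp]; exact ⟨_, rfl⟩

lemma kthLargest_le_iff {n k : ℕ} (hp : n - k < n) (y : Fin n → ℝ) (c : ℝ) :
    kthLargest n k y ≤ c ↔ n - k + 1 ≤ countLE y c :=
  ⟨fun h => (countLE_kthLargest hp y).trans (countLE_mono y h),
   kthLargest_le_of_countLE hp⟩

lemma measurable_kthLargest (n k : ℕ) : Measurable (kthLargest n k) := by
  by_cases hp : n - k < n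
  · apply measurable_of_Iic
    intro c
    have : kthLargest n k ⁻¹' Set.Iic c
        = ⋃ (S : Finset (Fin n)) (_ : S.card = n - k + 1), ⋂ i ∈ S, {y : Fin n → ℝ | y i ≤ c} := by
      ext y
      simp only [Set.mem_preimage, Set.mem_Iic, Set.mem_iUnion, Set.mem_iInter, Set.mem_setOf_eq]
      rw [kthLargest_le_iff hp]
      constructor
      · intro h
        obtain ⟨S, hS, hcard⟩ := Finset.exists_subset_card_eq h
        exact ⟨S, hcard, fun i hi => by
          have := hS hi; simp only [Finset.mem_filter] at this; exact this.2⟩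
      · rintro ⟨S, hcard, hS⟩
        calc n - k + 1 = S.card := hcard.symm
          _ ≤ _ := Finset.card_le_card fun i hi => by
              simp only [Finset.mem_filter, Finset.mem_univ, true_and]; exact hS i hi
    rw [this]
    exact MeasurableSet.iUnion fun S => MeasurableSet.iUnion fun _ =>
      MeasurableSet.biInter S.countable_toSet fun i _ =>
        measurableSet_le (measurable_pi_apply i) measurable_const
  · have : kthLargest n k = fun _ => (0:ℝ) := by
      funext y; rw [kthLargest, dif_neg hp]
    rw [this]; exact measurable_const

lemma kthLargest_mem_Icc {n k : ℕ} {y : Fin n → ℝ} {v : ℝ} (hv : 0 ≤ v)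
    (hy : ∀ i, y i ∈ Set.Icc 0 v) : kthLargest n k y ∈ Set.Icc (0:ℝ) v := by
  by_cases hp : n - k < n
  · obtain ⟨i, hi⟩ := kthLargest_mem_range hp y
    rw [hi]; exact hy i
  · simp only [kthLargest, dif_neg hp]
    exact ⟨le_refl 0, hv⟩

lemma countLE_castSucc_le {m : ℕ} (y : Fin (m + 1) → ℝ) (c : ℝ) :
    countLE (y ∘ Fin.castSucc) c ≤ countLE y c := by
  unfold countLE
  apply Finset.card_le_card_of_injOn Fin.castSucc
  · intro i hi; simp_all
  · intro a _ b _ hab; exact Fin.castSucc_injective m hab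

lemma kthLargest_castSucc_le {m κ : ℕ} (hκ1 : 1 ≤ κ) (hκm : κ ≤ m) (y : Fin (m + 1) → ℝ) :
    kthLargest (m + 1) (κ + 1) y ≤ kthLargest m κ (y ∘ Fin.castSucc) := by
  apply kthLargest_le_of_countLE (by omega)
  have h1 := countLE_kthLargest (show m - κ < m by omega) (y ∘ Fin.castSucc)
  have h2 := countLE_castSucc_le y (kthLargest m κ (y ∘ Fin.castSucc))
  omega

lemma kthLargest_castSucc_lt {m κ : ℕ} (hκ1 : 1 ≤ κ) (hκm : κ ≤ m) {δ : ℝ}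
    (y : Fin (m + 1) → ℝ)
    (hsep : ∀ i j : Fin (m + 1), i ≠ j → y i ≤ y j - δ ∨ y j ≤ y i - δ)
    (hlast : ∀ i : Fin m, y (Fin.last m) ≤ y (Fin.castSucc i) - δ) :
    kthLargest (m + 1) (κ + 1) y ≤ kthLargest m κ (y ∘ Fin.castSucc) - δ := by
  have hp : m - κ < m := by omega
  obtain ⟨i0, hi0⟩ := kthLargest_mem_range hp (y ∘ Fin.castSucc)
  have hcardA : m - κ + 1
      ≤ (Finset.univ.filter fun i : Fin m =>
          (y ∘ Fin.castSucc) i ≤ kthLargest m κ (y ∘ Fin.castSucc)).card :=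
    countLE_kthLargest hp (y ∘ Fin.castSucc)
  have hAB : ((Finset.univ.filter fun i : Fin m =>
        (y ∘ Fin.castSucc) i ≤ kthLargest m κ (y ∘ Fin.castSucc)) \
      (Finset.univ.filter fun i : Fin m =>
        (y ∘ Fin.castSucc) i ≤ kthLargest m κ (y ∘ Fin.castSucc) - δ)).card ≤ 1 := by
    apply Finset.card_le_one.mpr
    intro i hi j hj
    by_contra hij
    simp only [Finset.mem_sdiff, Finset.mem_filter, Finset.mem_univ, true_and,
      not_le, Function.comp_apply] at hi hj
    have hne : Fin.castSucc i ≠ Fin.castSucc j := fun h => hij (Fin.castSucc_injective m h)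
    rcases hsep _ _ hne with h | h
    · linarith [hi.2, hj.1]
    · linarith [hj.2, hi.1]
  have hcardB : m - κ ≤ (Finset.univ.filter fun i : Fin m =>
      (y ∘ Fin.castSucc) i ≤ kthLargest m κ (y ∘ Fin.castSucc) - δ).card := by
    have := Finset.card_le_card_sdiff_add_card
      (s := Finset.univ.filter fun i : Fin m =>
        (y ∘ Fin.castSucc) i ≤ kthLargest m κ (y ∘ Fin.castSucc))
      (t := Finset.univ.filter fun i : Fin m =>
        (y ∘ Fin.castSucc) i ≤ kthLargest m κ (y ∘ Fin.castSucc) - δ)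
    omega
  apply kthLargest_le_of_countLE (by omega)
  have hsub : insert (Fin.last m) (((Finset.univ.filter fun i : Fin m =>
        (y ∘ Fin.castSucc) i ≤ kthLargest m κ (y ∘ Fin.castSucc) - δ)).image Fin.castSucc)
      ⊆ Finset.univ.filter fun i : Fin (m+1) =>
          y i ≤ kthLargest m κ (y ∘ Fin.castSucc) - δ := by
    intro i hi
    simp only [Finset.mem_insert, Finset.mem_image, Finset.mem_filter, Finset.mem_univ,
      true_and, Function.comp_apply] at hi ⊢
    rcases hi with rfl | ⟨j, hj, rfl⟩
    · rw [hi0]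
      exact hlast i0
    · exact hj
  have hlastnot : Fin.last m ∉ ((Finset.univ.filter fun i : Fin m =>
      (y ∘ Fin.castSucc) i ≤ kthLargest m κ (y ∘ Fin.castSucc) - δ)).image Fin.castSucc := by
    simp only [Finset.mem_image, not_exists]
    intro j
    intro ⟨_, h⟩
    exact absurd h (Fin.castSucc_lt_last j).ne
  have hdet := Finset.card_le_card hsub
  rw [Finset.card_insert_of_notMem hlastnot, Finset.card_image_of_injective _
    (Fin.castSucc_injective m)] at hdet
  show m + 1 - (κ + 1) + 1 ≤ (Finset.univ.filter fun i : Fin (m+1) =>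
    y i ≤ kthLargest m κ (y ∘ Fin.castSucc) - δ).card
  omega

/-- Expected value of the `κ`-th largest of `m` i.i.d. draws from the truncation of
`μ` to `[0, v]` (i.e. `μ` conditioned on `[0, v]`). -/
noncomputable def truncExpOrderStat (μ : Measure ℝ) (m κ : ℕ) (v : ℝ) : ℝ :=
  ∫ y, kthLargest m κ y
    ∂(Measure.pi fun _ : Fin m => ProbabilityTheory.cond μ (Set.Icc 0 v))



lemma measurable_comp_castSucc {m : ℕ} :
    Measurable (fun y : Fin (m + 1) → ℝ => y ∘ Fin.castSucc) :=
  measurable_pi_lambda _ fun i => measurable_pi_apply _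

lemma map_comp_castSucc_pi {m : ℕ} (ν : Measure ℝ) [IsProbabilityMeasure ν] :
    Measure.map (fun y : Fin (m + 1) → ℝ => y ∘ Fin.castSucc)
      (Measure.pi fun _ : Fin (m + 1) => ν) = Measure.pi fun _ : Fin m => ν := by
  refine (Measure.pi_eq (μ := fun _ : Fin m => ν) fun s hs => ?_).symm
  rw [Measure.map_apply measurable_comp_castSucc (MeasurableSet.univ_pi hs)]
  have hpre : (fun y : Fin (m + 1) → ℝ => y ∘ Fin.castSucc) ⁻¹' Set.pi Set.univ s
      = Set.pi Set.univ
        (fun j : Fin (m + 1) => if h : (j : ℕ) < m then s ⟨j, h⟩ else Set.univ) := by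
    ext y
    simp only [Set.mem_preimage, Set.mem_pi, Set.mem_univ, true_implies,
      Function.comp_apply]
    constructor
    · intro h j
      by_cases hj : (j : ℕ) < m
      · rw [dif_pos hj]
        have := h ⟨(j : ℕ), hj⟩
        have hcast : Fin.castSucc (⟨(j : ℕ), hj⟩ : Fin m) = j := by
          apply Fin.ext; simp
        rwa [hcast] at this
      · rw [dif_neg hj]; trivial
    · intro h i
      have := h (Fin.castSucc i)
      rw [dif_pos (by simp [i.isLt] : ((Fin.castSucc i : Fin (m+1)) : ℕ) < m)] at this
      have hcast : (⟨((Fin.castSucc i : Fin (m+1)) : ℕ), by simp [i.isLt]⟩ : Fin m) = i := by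
        apply Fin.ext; simp
      rwa [hcast] at this
  rw [hpre, Measure.pi_pi]
  rw [Fin.prod_univ_castSucc]
  have hlast : (if h : ((Fin.last m : Fin (m+1)) : ℕ) < m
      then ν (s ⟨((Fin.last m : Fin (m+1)) : ℕ), h⟩) else ν Set.univ) = 1 := by
    rw [dif_neg (by simp)]; exact measure_univ
  have hstep : ∀ i : Fin m, (if h : ((Fin.castSucc i : Fin (m+1)) : ℕ) < m
      then ν (s ⟨((Fin.castSucc i : Fin (m+1)) : ℕ), h⟩) else ν Set.univ) = ν (s i) := by
    intro i
    rw [dif_pos (by simp [i.isLt])]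
    have he : (⟨((Fin.castSucc i : Fin (m+1)) : ℕ), by simp [i.isLt]⟩ : Fin m) = i := by
      apply Fin.ext; simp
    rw [he]
  simp only [apply_dite ν] at hlast hstep ⊢
  rw [hlast, mul_one]
  exact Finset.prod_congr rfl fun i _ => hstep i

lemma integrable_kthLargest {n k : ℕ} {π : Measure (Fin n → ℝ)} [IsProbabilityMeasure π]
    {v : ℝ} (hv : 0 ≤ v) (hbound : ∀ᵐ y ∂π, ∀ i, y i ∈ Set.Icc (0:ℝ) v) :
    Integrable (kthLargest n k) π := by
  constructor
  · exact (measurable_kthLargest n k).aestronglyMeasurable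
  · apply MeasureTheory.HasFiniteIntegral.of_bounded (C := v)
    filter_upwards [hbound] with y hy
    have h := kthLargest_mem_Icc (n := n) (k := k) hv hy
    rw [Real.norm_eq_abs, abs_le]
    exact ⟨by linarith [h.1], h.2⟩

lemma ae_mem_Icc_pi {m : ℕ} (ν : Measure ℝ) [IsProbabilityMeasure ν] {v : ℝ}
    (h1 : ν (Set.Icc 0 v) = 1) :
    ∀ᵐ y ∂(Measure.pi fun _ : Fin m => ν), ∀ i, y i ∈ Set.Icc (0:ℝ) v := by
  have hS : MeasurableSet (Set.pi Set.univ fun _ : Fin m => Set.Icc (0:ℝ) v) :=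
    MeasurableSet.univ_pi fun _ => measurableSet_Icc
  have hval : (Measure.pi fun _ : Fin m => ν) (Set.pi Set.univ fun _ => Set.Icc (0:ℝ) v) = 1 := by
    rw [Measure.pi_pi]; simp [h1]
  have hc := (prob_compl_eq_zero_iff hS).mpr hval
  rw [ae_iff]
  have heq : {y : Fin m → ℝ | ¬ ∀ i, y i ∈ Set.Icc (0:ℝ) v}
      = (Set.pi Set.univ fun _ : Fin m => Set.Icc (0:ℝ) v)ᶜ := by
    ext y
    simp only [Set.mem_setOf_eq, Set.mem_compl_iff, Set.mem_pi, Set.mem_univ, true_implies]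
  rw [heq]; exact hc

lemma truncExp_strict_anti (μ : Measure ℝ) [IsProbabilityMeasure μ]
    {vbar v : ℝ} (hv0 : 0 < v) (hvv : v ≤ vbar)
    (hsupp2 : ∀ a b : ℝ, 0 ≤ a → a < b → b ≤ vbar → 0 < μ (Set.Ioo a b))
    (m κ : ℕ) (hκ1 : 1 ≤ κ) (hκm : κ ≤ m) :
    truncExpOrderStat μ (m + 1) (κ + 1) v < truncExpOrderStat μ m κ v := by
  have hμI0 : μ (Set.Icc 0 v) ≠ 0 := by
    intro h
    have h2 := hsupp2 0 v le_rfl hv0 hvv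
    have h3 := measure_mono (μ := μ) (Set.Ioo_subset_Icc_self (a := (0:ℝ)) (b := v))
    rw [h] at h3
    exact absurd (lt_of_lt_of_le h2 h3) (by simp)
  set ν := ProbabilityTheory.cond μ (Set.Icc 0 v) with hν
  haveI : IsProbabilityMeasure ν := ProbabilityTheory.cond_isProbabilityMeasure hμI0
  have hνI : ν (Set.Icc 0 v) = 1 := by
    rw [hν]
    exact ProbabilityTheory.cond_apply_self hμI0 (measure_ne_top μ _)
  have hνIoo : ∀ a b : ℝ, 0 ≤ a → a < b → b ≤ v → 0 < ν (Set.Ioo a b) := by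
    intro a b ha hab hbv
    rw [hν, ProbabilityTheory.cond_apply measurableSet_Icc]
    apply ENNReal.mul_pos
    · exact ENNReal.inv_ne_zero.mpr (measure_ne_top μ _)
    · have hsub : Set.Ioo a b ⊆ Set.Icc 0 v := fun x hx =>
        ⟨le_trans ha hx.1.le, le_trans hx.2.le hbv⟩
      rw [Set.inter_eq_self_of_subset_right hsub]
      exact (hsupp2 a b ha hab (hbv.trans hvv)).ne'
  set π1 : Measure (Fin (m + 1) → ℝ) := Measure.pi fun _ => ν with hπ1
  set π0 : Measure (Fin m → ℝ) := Measure.pi fun _ => ν with hπ0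
  haveI : IsProbabilityMeasure π1 := by rw [hπ1]; infer_instance
  haveI : IsProbabilityMeasure π0 := by rw [hπ0]; infer_instance
  have hbound1 : ∀ᵐ y ∂π1, ∀ i, y i ∈ Set.Icc (0:ℝ) v := ae_mem_Icc_pi ν hνI
  have hbound0 : ∀ᵐ y ∂π0, ∀ i, y i ∈ Set.Icc (0:ℝ) v := ae_mem_Icc_pi ν hνI
  have hf_int : Integrable (kthLargest (m + 1) (κ + 1)) π1 :=
    integrable_kthLargest hv0.le hbound1
  have hg0_int : Integrable (kthLargest m κ) π0 := integrable_kthLargest hv0.le hbound0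
  have hmap : Measure.map (fun y : Fin (m + 1) → ℝ => y ∘ Fin.castSucc) π1 = π0 :=
    map_comp_castSucc_pi ν
  have hg_int : Integrable (fun y : Fin (m + 1) → ℝ => kthLargest m κ (y ∘ Fin.castSucc)) π1 := by
    rw [← hmap] at hg0_int
    exact (integrable_map_measure ((measurable_kthLargest m κ).aestronglyMeasurable)
      measurable_comp_castSucc.aemeasurable).mp hg0_int
  have hgint_eq : ∫ y, kthLargest m κ (y ∘ Fin.castSucc) ∂π1 = truncExpOrderStat μ m κ v := by
    rw [truncExpOrderStat, ← hν, ← hπ0, ← hmap,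
      integral_map measurable_comp_castSucc.aemeasurable
        ((measurable_kthLargest m κ).aestronglyMeasurable)]
  have hfint_eq : ∫ y, kthLargest (m + 1) (κ + 1) y ∂π1
      = truncExpOrderStat μ (m + 1) (κ + 1) v := by
    rw [truncExpOrderStat, ← hν, ← hπ1]
  -- the event on which the inequality is strict
  set D : ℝ := 2 * (m : ℝ) + 4 with hD
  have hDpos : 0 < D := by positivity
  set δ : ℝ := v / D with hδdef
  have hδ : 0 < δ := by positivity
  set r : Fin (m + 1) → ℕ := fun i => if i = Fin.last m then 0 else (i : ℕ) + 1 with hr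
  have hrinj : ∀ i j : Fin (m + 1), i ≠ j → r i ≠ r j := by
    intro i j hij
    simp only [hr]
    by_cases hi : i = Fin.last m <;> by_cases hj : j = Fin.last m
    · exact absurd (hi.trans hj.symm) hij
    · simp [hi, hj]
    · simp [hi, hj]
    · simp only [if_neg hi, if_neg hj]
      intro h
      exact hij (Fin.ext (by omega))
  have hrle : ∀ i, r i ≤ m := by
    intro i
    simp only [hr]
    by_cases hi : i = Fin.last m
    · simp [hi]
    · rw [if_neg hi]
      have : (i : ℕ) ≠ m := fun h => hi (Fin.ext (by simp [h]))
      have := i.isLt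
      omega
  set J : Fin (m + 1) → Set ℝ :=
    fun i => Set.Ioo (v * (2 * (r i : ℝ) + 1) / D) (v * (2 * (r i : ℝ) + 2) / D) with hJ
  set E : Set (Fin (m + 1) → ℝ) := Set.pi Set.univ J with hEdef
  have hE : MeasurableSet E := MeasurableSet.univ_pi fun i => measurableSet_Ioo
  have hEpos : π1 E ≠ 0 := by
    rw [hπ1, hEdef, Measure.pi_pi]
    apply Finset.prod_ne_zero_iff.mpr
    intro i _
    apply (hνIoo _ _ ?_ ?_ ?_).ne'
    · positivity
    · exact (div_lt_div_iff_of_pos_right hDpos).mpr (by nlinarith)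
    · rw [div_le_iff₀ hDpos]
      have hc : ((r i : ℕ) : ℝ) ≤ (m : ℝ) := Nat.cast_le.mpr (hrle i)
      nlinarith
  -- arithmetic helper
  have harith : ∀ p q : ℕ, p < q → ∀ y1 y2 : ℝ,
      y1 < v * (2 * (p : ℝ) + 2) / D → v * (2 * (q : ℝ) + 1) / D < y2 → y1 ≤ y2 - δ := by
    intro p q hpq y1 y2 h1 h2
    have hc : (p : ℝ) + 1 ≤ (q : ℝ) := by exact_mod_cast hpq
    have h3 : v * (2 * (p : ℝ) + 2) / D ≤ v * (2 * (q : ℝ)) / D :=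
      (div_le_div_iff_of_pos_right hDpos).mpr (by nlinarith)
    have h4 : v * (2 * (q : ℝ) + 1) / D = v * (2 * (q : ℝ)) / D + δ := by
      rw [hδdef]; field_simp
    linarith
  have hsepE : ∀ y ∈ E, ∀ i j : Fin (m + 1), i ≠ j → y i ≤ y j - δ ∨ y j ≤ y i - δ := by
    intro y hy i j hij
    have hyi := hy i (Set.mem_univ i)
    have hyj := hy j (Set.mem_univ j)
    rcases lt_or_gt_of_ne (hrinj i j hij) with h | h
    · exact Or.inl (harith _ _ h _ _ hyi.2 hyj.1)
    · exact Or.inr (harith _ _ h _ _ hyj.2 hyi.1)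
  have hlastE : ∀ y ∈ E, ∀ i : Fin m, y (Fin.last m) ≤ y (Fin.castSucc i) - δ := by
    intro y hy i
    have hylast := hy (Fin.last m) (Set.mem_univ _)
    have hyi := hy (Fin.castSucc i) (Set.mem_univ _)
    have hrlast : r (Fin.last m) = 0 := by simp [hr]
    have hrcast : r (Fin.castSucc i) = (i : ℕ) + 1 := by
      rw [hr]
      simp only [if_neg (Fin.castSucc_lt_last i).ne]
      simp
    apply harith 0 ((i : ℕ) + 1) (by omega)
    · have := hylast.2; rwa [hrlast] at this; 
    · have := hyi.1; rwa [hrcast] at this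
  -- pointwise bound
  have hpt : ∀ y : Fin (m + 1) → ℝ, E.indicator (fun _ => δ) y
      ≤ kthLargest m κ (y ∘ Fin.castSucc) - kthLargest (m + 1) (κ + 1) y := by
    intro y
    by_cases hy : y ∈ E
    · rw [Set.indicator_of_mem hy]
      have := kthLargest_castSucc_lt hκ1 hκm y (hsepE y hy) (hlastE y hy)
      linarith
    · rw [Set.indicator_of_notMem hy]
      have := kthLargest_castSucc_le hκ1 hκm y
      linarith
  have hind_int : Integrable (E.indicator fun _ => δ) π1 := (integrable_const δ).indicator hE
  have hmono := integral_mono hind_int (hg_int.sub hf_int) hpt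
  rw [integral_indicator_const δ hE] at hmono
  simp only [Pi.sub_apply] at hmono
  rw [integral_sub hg_int hf_int, hgint_eq, hfint_eq] at hmono
  have htoReal : 0 < (π1 E).toReal := ENNReal.toReal_pos hEpos (measure_ne_top π1 E)
  have : 0 < (π1 E).toReal • δ := by
    rw [smul_eq_mul]; exact mul_pos htoReal hδ
  rw [← measureReal_def] at this
  linarith

lemma Icc_succ_insert {a b : ℕ} (h : a ≤ b + 1) :
    Finset.Icc a (b + 1) = insert (b + 1) (Finset.Icc a b) := by
  ext x; simp only [Finset.mem_Icc, Finset.mem_insert]; omega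

lemma sum_Icc_succ_top' {a b : ℕ} (h : a ≤ b + 1) (f : ℕ → ℝ) :
    ∑ i ∈ Finset.Icc a (b + 1), f i = (∑ i ∈ Finset.Icc a b, f i) + f (b + 1) := by
  rw [Icc_succ_insert h, Finset.sum_insert (by simp)]
  ring

lemma telescope_e (e : ℕ → ℝ) : ∀ k : ℕ, 1 ≤ k →
    e 1 + ∑ j ∈ Finset.Icc 2 k, (e j - e (j - 1)) = e k := by
  intro k
  induction k with
  | zero => omega
  | succ k ih =>
    intro _
    rcases Nat.eq_zero_or_pos k with rfl | hk
    · simp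
    · rw [sum_Icc_succ_top' (by omega)]
      have := ih hk
      have hk1 : k + 1 - 1 = k := by omega
      rw [hk1]
      linarith

lemma abel_identity (u e : ℕ → ℝ) : ∀ k : ℕ,
    ∑ κ ∈ Finset.Icc 1 k, u κ * e κ
      = (∑ κ ∈ Finset.Icc 1 k, u κ) * e 1
        + ∑ j ∈ Finset.Icc 2 k, (∑ i ∈ Finset.Icc j k, u i) * (e j - e (j - 1)) := by
  intro k
  induction k with
  | zero => simp
  | succ k ih =>
    rcases Nat.eq_zero_or_pos k with rfl | hk
    · norm_num
    · rw [sum_Icc_succ_top' (by omega) (fun κ => u κ * e κ),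
        sum_Icc_succ_top' (by omega) u, ih,
        sum_Icc_succ_top' (by omega) (fun j => (∑ i ∈ Finset.Icc j (k+1), u i) * (e j - e (j-1)))]
      have hinner : ∑ j ∈ Finset.Icc 2 k, (∑ i ∈ Finset.Icc j (k + 1), u i) * (e j - e (j - 1))
          = ∑ j ∈ Finset.Icc 2 k, ((∑ i ∈ Finset.Icc j k, u i) + u (k + 1)) * (e j - e (j - 1)) := by
        apply Finset.sum_congr rfl
        intro j hj
        simp only [Finset.mem_Icc] at hj
        rw [sum_Icc_succ_top' (by omega) u]
      rw [hinner]
      have hIccself : ∑ i ∈ Finset.Icc (k + 1) (k + 1), u i = u (k + 1) := by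
        rw [Finset.Icc_self, Finset.sum_singleton]
      rw [hIccself]
      have hexpand : ∑ j ∈ Finset.Icc 2 k, ((∑ i ∈ Finset.Icc j k, u i) + u (k + 1)) * (e j - e (j - 1))
          = (∑ j ∈ Finset.Icc 2 k, (∑ i ∈ Finset.Icc j k, u i) * (e j - e (j - 1)))
            + u (k + 1) * ∑ j ∈ Finset.Icc 2 k, (e j - e (j - 1)) := by
        rw [Finset.mul_sum, ← Finset.sum_add_distrib]
        apply Finset.sum_congr rfl
        intro j _
        ring
      rw [hexpand]
      have htel := telescope_e e k hk
      have hsum : ∑ j ∈ Finset.Icc 2 k, (e j - e (j - 1)) = e k - e 1 := by linarith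
      have hk1 : k + 1 - 1 = k := by omega
      rw [hk1, hsum]
      ring

lemma fosd_sum_lt (k : ℕ) (hk1 : 1 ≤ k) (e w w' : ℕ → ℝ)
    (hdec : ∀ j ∈ Finset.Icc 2 k, e j < e (j - 1))
    (hwsum : ∑ i ∈ Finset.Icc 1 k, w i = 1)
    (hw'sum : ∑ i ∈ Finset.Icc 1 k, w' i = 1)
    (hFOSD : ∀ j ∈ Finset.Icc 1 k,
      ∑ i ∈ Finset.Icc j k, w' i ≤ ∑ i ∈ Finset.Icc j k, w i)
    (hstrict : ∃ j ∈ Finset.Icc 1 k,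
      ∑ i ∈ Finset.Icc j k, w' i < ∑ i ∈ Finset.Icc j k, w i) :
    ∑ κ ∈ Finset.Icc 1 k, w κ * e κ < ∑ κ ∈ Finset.Icc 1 k, w' κ * e κ := by
  rw [abel_identity w e k, abel_identity w' e k, hwsum, hw'sum]
  apply add_lt_add_right
  apply Finset.sum_lt_sum
  · intro j hj
    have hmem : j ∈ Finset.Icc 1 k := by
      simp only [Finset.mem_Icc] at hj ⊢; omega
    have hd : e j - e (j - 1) < 0 := by linarith [hdec j hj]
    exact mul_le_mul_of_nonpos_right (hFOSD j hmem) hd.le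
  · obtain ⟨j0, hj0mem, hj0⟩ := hstrict
    have hne1 : j0 ≠ 1 := by
      intro h
      rw [h, hwsum, hw'sum] at hj0
      exact lt_irrefl 1 hj0
    simp only [Finset.mem_Icc] at hj0mem
    have hmem2 : j0 ∈ Finset.Icc 2 k := by
      simp only [Finset.mem_Icc]; omega
    refine ⟨j0, hmem2, ?_⟩
    have hd : e j0 - e (j0 - 1) < 0 := by linarith [hdec j0 hmem2]
    exact mul_lt_mul_of_neg_right hj0 hd


/-- **Lemma 3 of the paper (FOSD dominance of expected transfers).**
With `e κ v = E[Y_κ^{(n-k+κ-1)}]` for draws from `μ` truncated to `[0, v]`,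
if the belief `w` strictly FOSD dominates `w'`, then
`∑ κ w'(κ) e_κ(v) > ∑ κ w(κ) e_κ(v)`, i.e. `t_AE(v|μ', v) > t_AE(v|μ, v)`. -/
theorem tAE_FOSD_dominance
    (vbar : ℝ) (hvbar : 0 < vbar)
    (n k : ℕ) (hn : 2 ≤ n) (hk1 : 1 ≤ k) (hkn : k < n)
    (μ : Measure ℝ) [IsProbabilityMeasure μ]
    (hatomless : ∀ x : ℝ, μ {x} = 0)
    (hsupp1 : μ (Set.Icc 0 vbar) = 1)
    (hsupp2 : ∀ a b : ℝ, 0 ≤ a → a < b → b ≤ vbar → 0 < μ (Set.Ioo a b))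
    (w w' : ℕ → ℝ)
    (hw0 : ∀ i ∈ Finset.Icc 1 k, 0 ≤ w i)
    (hw'0 : ∀ i ∈ Finset.Icc 1 k, 0 ≤ w' i)
    (hwsum : ∑ i ∈ Finset.Icc 1 k, w i = 1)
    (hw'sum : ∑ i ∈ Finset.Icc 1 k, w' i = 1)
    (hFOSD : ∀ j ∈ Finset.Icc 1 k,
      ∑ i ∈ Finset.Icc j k, w' i ≤ ∑ i ∈ Finset.Icc j k, w i)
    (hstrict : ∃ j ∈ Finset.Icc 1 k,
      ∑ i ∈ Finset.Icc j k, w' i < ∑ i ∈ Finset.Icc j k, w i)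
    (v : ℝ) (hv : v ∈ Set.Ioc 0 vbar) :
    ∑ κ ∈ Finset.Icc 1 k, w κ * truncExpOrderStat μ (n - k + κ - 1) κ v
      < ∑ κ ∈ Finset.Icc 1 k, w' κ * truncExpOrderStat μ (n - k + κ - 1) κ v := by

  have hdec : ∀ j ∈ Finset.Icc 2 k,
      (fun j => truncExpOrderStat μ (n - k + j - 1) j v) j
        < (fun j => truncExpOrderStat μ (n - k + j - 1) j v) (j - 1) := by
    intro j hj
    simp only [Finset.mem_Icc] at hj
    have h := truncExp_strict_anti μ hv.1 hv.2 hsupp2 (n - k + j - 2) (j - 1)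
      (by omega) (by omega)
    have h1 : n - k + j - 2 + 1 = n - k + j - 1 := by omega
    have h2 : j - 1 + 1 = j := by omega
    have h3 : n - k + (j - 1) - 1 = n - k + j - 2 := by omega
    rw [h1, h2] at h
    show truncExpOrderStat μ (n - k + j - 1) j v
      < truncExpOrderStat μ (n - k + (j - 1) - 1) (j - 1) v
    rw [h3]
    exact h
  exact fosd_sum_lt k hk1 (fun j => truncExpOrderStat μ (n - k + j - 1) j v) w w'
    hdec hwsum hw'sum hFOSD hstrict
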